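/- arXiv:2110.12128 — 2 statements merged into one kernel-verified Lean document; each statement's English description precedes it below -/
import Mathlib

section
/- Let S be a left cancellative monoid and R a ring with a finite S-grading of support size d. If R_e is nil of index 2 (a² = 0 for all a ∈ R_e) and R_e has no 2-torsion (characteristic of R_e ≠ 2), then (R_e)³ = 0 and R is nilpotent with nd(R) ≤ 3d. -/
/-- Product `a * l₀ * l₁ * ⋯` of a nonempty list of ring elements. -/
def mulList {R : Type*} [Mul R] (a : R) (l : List R) : R := l.foldl (· * ·) a

/-- `pw a n` is `aⁿ` for `n ≥ 1` (junk value `0` at `n = 0`). -/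
def pw {R : Type*} [Mul R] [Zero R] (a : R) : ℕ → R
  | 0 => 0
  | 1 => a
  | n + 2 => pw a (n + 1) * a

/-- Product of `n` elements given by `f` (junk `0` when `n = 0`). -/
def finProd {R : Type*} [Mul R] [Zero R] : {n : ℕ} → (Fin n → R) → R
  | 0, _ => 0
  | n + 1, f => mulList (f 0) (List.ofFn fun i : Fin n => f i.succ)

/-- `R ^ n = 0`: every product of `n` elements of `R` vanishes. -/
def PowZero (R : Type*) [Mul R] [Zero R] (n : ℕ) : Prop :=
  ∀ (a : R) (l : List R), l.length + 1 = n → mulList a l = 0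

/-- `T ^ n = 0` for a subset `T` of a ring. -/
def PowZeroOn {R : Type*} [Mul R] [Zero R] (T : Set R) (n : ℕ) : Prop :=
  ∀ (a : R) (l : List R), a ∈ T → (∀ x ∈ l, x ∈ T) → l.length + 1 = n → mulList a l = 0

/-- `a` is nilpotent: `aⁿ = 0` for some `n ≥ 1`. -/
def IsNilE {R : Type*} [Mul R] [Zero R] (a : R) : Prop := ∃ n, 1 ≤ n ∧ pw a n = 0

/-- A nil ring: every element is nilpotent. -/
def IsNilRing (R : Type*) [Mul R] [Zero R] : Prop := ∀ a : R, IsNilE a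

/-- An `S`-grading of the ring `R`: a direct sum decomposition into additive
subgroups with `R_g R_h ⊆ R_{gh}`. -/
structure IsGrading {S R : Type*} [Monoid S] [NonUnitalRing R] [DecidableEq S]
    (A : S → AddSubgroup R) : Prop where
  mul_mem : ∀ {g h : S} {x y : R}, x ∈ A g → y ∈ A h → x * y ∈ A (g * h)
  isInternal : DirectSum.IsInternal A

/-- Grading by an additively written monoid. -/
structure IsAddGrading {S R : Type*} [AddMonoid S] [NonUnitalRing R] [DecidableEq S]
    (A : S → AddSubgroup R) : Prop where
  mul_mem : ∀ {g h : S} {x y : R}, x ∈ A g → y ∈ A h → x * y ∈ A (g + h)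
  isInternal : DirectSum.IsInternal A

/-- The subset `T` of a ring is `f`-commutative: there are a semigroup `G` acting on it
from the left and a map `f` with `a*b = f(a,b)·(b*a)`. -/
def IsFCommutativeOn {R : Type*} [Mul R] (T : Set R) : Prop :=
  ∃ (G : Type) (_ : Semigroup G) (act : G → R → R),
    (∀ l m : G, ∀ x : R, x ∈ T → act (l * m) x = act l (act m x)) ∧
    (∀ l : G, ∀ x : R, x ∈ T → act l x ∈ T) ∧
    (∀ l : G, ∀ x y : R, x ∈ T → y ∈ T → act l (x * y) = act l x * y) ∧
    ∃ f : R → R → G, ∀ a b : R, a ∈ T → b ∈ T → a * b = act (f a b) (b * a)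

/-- The ring `R` is `f`-commutative. -/
def IsFCommutative (R : Type*) [Mul R] : Prop :=
  ∃ (G : Type) (_ : Semigroup G) (act : G → R → R),
    (∀ l m : G, ∀ x : R, act (l * m) x = act l (act m x)) ∧
    (∀ l : G, ∀ x y : R, act l (x * y) = act l x * y) ∧
    ∃ f : R → R → G, ∀ a b : R, a * b = act (f a b) (b * a)

/-- The order of `g`: least `n ≥ 1` with `gⁿ = 1`, and `0` if no such `n` exists. -/
noncomputable def ordOf {S : Type*} [Monoid S] (g : S) : ℕ := sInf {n | 1 ≤ n ∧ g ^ n = 1}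

section MulListLemmas
variable {R : Type*} [NonUnitalRing R]

lemma mulList_cons (a x : R) (l : List R) : mulList a (x :: l) = mulList (a * x) l := rfl

lemma mulList_append (a : R) (l₁ l₂ : List R) :
    mulList a (l₁ ++ l₂) = mulList (mulList a l₁) l₂ := List.foldl_append

lemma mulList_cons' (a x : R) (l : List R) : mulList a (x :: l) = a * mulList x l := by
  induction l generalizing a x with
  | nil => rfl
  | cons y l ih =>
    show mulList (a*x) (y::l) = a * mulList x (y::l)
    rw [ih (a*x) y, ih x y, mul_assoc]

lemma mulList_zero (l : List R) : mulList (0 : R) l = 0 := by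
  induction l with
  | nil => rfl
  | cons x l ih => show mulList (0*x) l = 0; rw [zero_mul]; exact ih

lemma mulList_add (a b : R) (l : List R) :
    mulList (a + b) l = mulList a l + mulList b l := by
  induction l generalizing a b with
  | nil => rfl
  | cons x l ih => show mulList ((a+b)*x) l = _; rw [add_mul]; exact ih _ _

lemma mul_listSum (a : R) (L : List R) : a * L.sum = (L.map (a * ·)).sum := by
  induction L with
  | nil => simp
  | cons x L ih => simp [mul_add, ih]

lemma mulList_listSum (M : List R) (l : List R) :
    mulList M.sum l = (M.map (mulList · l)).sum := by
  induction M with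
  | nil => simpa using mulList_zero l
  | cons x M ih => rw [List.sum_cons, mulList_add, List.map_cons, List.sum_cons, ih]

end MulListLemmas

private lemma forall₂_append {α β : Type*} {r : α → β → Prop} {l1 l2 : List α} {m1 m2 : List β}
    (h1 : List.Forall₂ r l1 m1) (h2 : List.Forall₂ r l2 m2) :
    List.Forall₂ r (l1 ++ l2) (m1 ++ m2) := by
  induction h1 with
  | nil => exact h2
  | cons h _ ih => exact List.Forall₂.cons h ih

private lemma mulList_mem {S R : Type*} [Monoid S] [NonUnitalRing R]
    {A : S → AddSubgroup R}
    (hmul : ∀ {g h : S} {x y : R}, x ∈ A g → y ∈ A h → x * y ∈ A (g*h)) :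
    ∀ {l : List R} {gs : List S}, List.Forall₂ (fun x h => x ∈ A h) l gs →
      ∀ {b : R} {g : S}, b ∈ A g → mulList b l ∈ A (g * gs.prod) := by
  intro l gs h
  induction h with
  | nil => intro b g hb; simpa [mulList] using hb
  | cons hx hrest ih =>
    intro b g hb
    rw [List.prod_cons, ← mul_assoc]
    exact ih (hmul hb hx)

private lemma triple_zero {S R : Type*} [Monoid S] [NonUnitalRing R]
    (A : S → AddSubgroup R)
    (hmul : ∀ {g h : S} {x y : R}, x ∈ A g → y ∈ A h → x * y ∈ A (g*h))
    (h2 : ∀ a ∈ A 1, a * a = 0) (htor : ∀ x ∈ A 1, x + x = 0 → x = 0)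
    {a b c : R} (ha : a ∈ A 1) (hb : b ∈ A 1) (hc : c ∈ A 1) : a * b * c = 0 := by
  have hm : ∀ {x y : R}, x ∈ A 1 → y ∈ A 1 → x * y ∈ A 1 := fun hx hy => by
    simpa using hmul hx hy
  have anti : ∀ {x y : R}, x ∈ A 1 → y ∈ A 1 → x * y = -(y * x) := by
    intro x y hx hy
    have h := h2 (x + y) ((A 1).add_mem hx hy)
    rw [add_mul, mul_add, mul_add, h2 x hx, h2 y hy] at h
    have h' : x * y + y * x = 0 := by simpa using h
    exact eq_neg_of_add_eq_zero_left h'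
  have habc : a * b * c ∈ A 1 := hm (hm ha hb) hc
  have key : a * b * c = -(a * b * c) := by
    calc a * b * c = -(c * (a * b)) := anti (hm ha hb) hc
    _ = -((c * a) * b) := by rw [mul_assoc]
    _ = b * (c * a) := by rw [anti (hm hc ha) hb, neg_neg]
    _ = (b * c) * a := (mul_assoc _ _ _).symm
    _ = -(a * (b * c)) := anti (hm hb hc) ha
    _ = -(a * b * c) := by rw [mul_assoc]
  refine htor _ habc ?_
  nth_rewrite 2 [key]
  exact add_neg_cancel _

private lemma homogKey {S R : Type*} [Monoid S] [IsLeftCancelMul S] [DecidableEq S]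
    [NonUnitalRing R] (A : S → AddSubgroup R)
    (hmul : ∀ {g h : S} {x y : R}, x ∈ A g → y ∈ A h → x * y ∈ A (g*h))
    (d : ℕ) (hfin : {g : S | A g ≠ ⊥}.Finite) (hcard : hfin.toFinset.card = d)
    (h3 : ∀ {u v w : R}, u ∈ A 1 → v ∈ A 1 → w ∈ A 1 → u * v * w = 0)
    {b : R} {g : S} {l : List R} {gs : List S}
    (hb : b ∈ A g) (hl : List.Forall₂ (fun x h => x ∈ A h) l gs)
    (hlen : l.length + 1 = 3 * d) : mulList b l = 0 := by
  by_contra hne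
  set n := l.length with hn
  have memP : ∀ i : ℕ, mulList b (l.take i) ∈ A (g * (gs.take i).prod) :=
    fun i => mulList_mem hmul (List.forall₂_take i hl) hb
  have Pne : ∀ i : ℕ, mulList b (l.take i) ≠ 0 := by
    intro i h0
    apply hne
    conv_lhs => rw [← List.take_append_drop i l]
    rw [mulList_append, h0, mulList_zero]
  have hsupp : ∀ i : ℕ, g * (gs.take i).prod ∈ hfin.toFinset := by
    intro i
    rw [Set.Finite.mem_toFinset]
    intro hbot
    exact Pne i (by simpa [hbot] using memP i)
  have chunk : ∀ i j : ℕ, i < j → j ≤ n →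
      g * (gs.take i).prod = g * (gs.take j).prod →
      ∃ u ∈ A 1, mulList b (l.take j) = mulList b (l.take i) * u := by
    intro i j hij hjn hpij
    have hij' : i + (j - i) = j := by omega
    have hsl : l.take j = l.take i ++ (l.drop i).take (j - i) := by
      conv_lhs => rw [← hij']
      exact List.take_add
    have hsg : gs.take j = gs.take i ++ (gs.drop i).take (j - i) := by
      conv_lhs => rw [← hij']
      exact List.take_add
    have hm : List.Forall₂ (fun x h => x ∈ A h) ((l.drop i).take (j-i)) ((gs.drop i).take (j-i)) :=
      List.forall₂_take _ (List.forall₂_drop _ hl)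
    have hmlen : ((l.drop i).take (j-i)).length = j - i := by
      rw [List.length_take, List.length_drop]; omega
    cases hmm : (l.drop i).take (j - i) with
    | nil => rw [hmm, List.length_nil] at hmlen; omega
    | cons x rest =>
      rw [hmm] at hm hsl
      obtain ⟨h₀, hs, hx, hrest, hms⟩ := List.forall₂_cons_left_iff.1 hm
      have hprod1 : ((gs.drop i).take (j-i)).prod = 1 := by
        have hsplit : g * (gs.take j).prod
            = (g * (gs.take i).prod) * ((gs.drop i).take (j-i)).prod := by
          rw [hsg, List.prod_append, mul_assoc]
        apply mul_left_cancel (a := g * (gs.take i).prod)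
        rw [mul_one, ← hsplit, ← hpij]
      refine ⟨mulList x rest, ?_, ?_⟩
      · have := mulList_mem hmul hrest hx
        rwa [← List.prod_cons, ← hms, hprod1] at this
      · rw [hsl, mulList_append, mulList_cons']
  have quad : ∀ i j k m : ℕ, i < j → j < k → k < m → m ≤ n →
      g * (gs.take i).prod = g * (gs.take j).prod →
      g * (gs.take j).prod = g * (gs.take k).prod →
      g * (gs.take k).prod = g * (gs.take m).prod → False := by
    intro i j k m h1 h2' h3' h4 e1 e2 e3
    obtain ⟨u, hu, hPj⟩ := chunk i j h1 (by omega) e1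
    obtain ⟨v, hv, hPk⟩ := chunk j k h2' (by omega) e2
    obtain ⟨w, hw, hPm⟩ := chunk k m h3' h4 e3
    apply Pne m
    rw [hPm, hPk, hPj, mul_assoc, mul_assoc, ← mul_assoc u v w, h3 hu hv hw, mul_zero]
  have trip1 : ∀ i j k : ℕ, i < j → j < k → k ≤ n →
      g * (gs.take i).prod = 1 → g * (gs.take j).prod = 1 →
      g * (gs.take k).prod = 1 → False := by
    intro i j k h1 h2' h3' e1 e2 e3
    obtain ⟨u, hu, hPj⟩ := chunk i j h1 (by omega) (e1.trans e2.symm)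
    obtain ⟨v, hv, hPk⟩ := chunk j k h2' h3' (e2.trans e3.symm)
    have hPi : mulList b (l.take i) ∈ A 1 := by
      have := memP i; rwa [e1] at this
    apply Pne k
    rw [hPk, hPj]
    exact h3 hPi hu hv
  have hd : 1 ≤ d := by omega
  set F : Fin (n+1) → S := fun i => g * (gs.take i.val).prod with hF
  have hcu : (Finset.univ : Finset (Fin (n+1))).card = 3 * d := by
    simp [hlen]
  by_cases hbot : A (1 : S) = ⊥
  · have pair : ∀ i j : ℕ, i < j → j ≤ n →
        g * (gs.take i).prod = g * (gs.take j).prod → False := by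
      intro i j hij hjn hpij
      obtain ⟨u, hu, hPj⟩ := chunk i j hij hjn hpij
      rw [hbot, AddSubgroup.mem_bot] at hu
      exact Pne j (by rw [hPj, hu, mul_zero])
    have hinj : Set.InjOn F ↑(Finset.univ : Finset (Fin (n+1))) := by
      intro i _ j _ hFij
      by_contra hne'
      rcases lt_trichotomy i j with h | h | h
      · exact pair i.val j.val (Fin.lt_def.mp h) (Nat.lt_succ_iff.1 j.isLt) hFij
      · exact hne' h
      · exact pair j.val i.val (Fin.lt_def.mp h) (Nat.lt_succ_iff.1 i.isLt) hFij.symm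
    have hle := Finset.card_le_card_of_injOn F (fun i _ => hsupp i.val) hinj
    rw [hcu, hcard] at hle
    omega
  · have h1T : (1:S) ∈ hfin.toFinset := hfin.mem_toFinset.2 hbot
    have fb : ∀ s ∈ hfin.toFinset, ((Finset.univ.filter fun i => F i = s)).card ≤ 3 := by
      intro s _
      by_contra hgt
      push_neg at hgt
      obtain ⟨t, hts, ht4⟩ := Finset.exists_subset_card_eq (s := Finset.univ.filter fun i => F i = s) (n := 4) (by omega)
      set f := t.orderIsoOfFin ht4 with hf
      have hmem : ∀ i : Fin 4, F (f i : Fin (n+1)) = s := fun i =>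
        (Finset.mem_filter.1 (hts (f i).2)).2
      have hlt : ∀ {i j : Fin 4}, i < j → ((f i : Fin (n+1)) : ℕ) < ((f j : Fin (n+1)) : ℕ) :=
        fun h => f.strictMono h
      exact quad (f 0 : Fin (n+1)).val (f 1 : Fin (n+1)).val (f 2 : Fin (n+1)).val
        (f 3 : Fin (n+1)).val (hlt (by decide)) (hlt (by decide)) (hlt (by decide))
        (Nat.lt_succ_iff.1 (f 3 : Fin (n+1)).isLt)
        ((hmem 0).trans (hmem 1).symm) ((hmem 1).trans (hmem 2).symm)
        ((hmem 2).trans (hmem 3).symm)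
    have fb1 : ((Finset.univ.filter fun i => F i = (1:S))).card ≤ 2 := by
      by_contra hgt
      push_neg at hgt
      obtain ⟨t, hts, ht3⟩ := Finset.exists_subset_card_eq (s := Finset.univ.filter fun i => F i = (1:S)) (n := 3) (by omega)
      set f := t.orderIsoOfFin ht3 with hf
      have hmem : ∀ i : Fin 3, F (f i : Fin (n+1)) = 1 := fun i =>
        (Finset.mem_filter.1 (hts (f i).2)).2
      have hlt : ∀ {i j : Fin 3}, i < j → ((f i : Fin (n+1)) : ℕ) < ((f j : Fin (n+1)) : ℕ) :=
        fun h => f.strictMono h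
      exact trip1 (f 0 : Fin (n+1)).val (f 1 : Fin (n+1)).val (f 2 : Fin (n+1)).val
        (hlt (by decide)) (hlt (by decide))
        (Nat.lt_succ_iff.1 (f 2 : Fin (n+1)).isLt)
        (hmem 0) (hmem 1) (hmem 2)
    have hsum := Finset.card_eq_sum_card_fiberwise (f := F) (s := Finset.univ)
      (t := hfin.toFinset) (fun i _ => hsupp i.val)
    rw [hcu] at hsum
    have hlt2 : (∑ s ∈ hfin.toFinset, (Finset.univ.filter fun i => F i = s).card)
        < ∑ _s ∈ hfin.toFinset, 3 :=
      Finset.sum_lt_sum fb ⟨1, h1T, by have := fb1; omega⟩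
    rw [← hsum, Finset.sum_const, smul_eq_mul, hcard] at hlt2
    omega


theorem stmt_13 {S R : Type*} [Monoid S] [IsLeftCancelMul S] [DecidableEq S]
    [NonUnitalRing R] (A : S → AddSubgroup R) (hA : IsGrading A)
    (d : ℕ) (hfin : {g : S | A g ≠ ⊥}.Finite) (hcard : hfin.toFinset.card = d)
    (h2 : ∀ a ∈ A 1, a * a = 0) (htor : ∀ x ∈ A 1, x + x = 0 → x = 0) :
    PowZeroOn (A 1 : Set R) 3 ∧ PowZero R (3 * d) := by
  have hmul : ∀ {g h : S} {x y : R}, x ∈ A g → y ∈ A h → x * y ∈ A (g * h) :=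
    fun hx hy => hA.mul_mem hx hy
  have h3 : ∀ {u v w : R}, u ∈ A 1 → v ∈ A 1 → w ∈ A 1 → u * v * w = 0 :=
    fun hu hv hw => triple_zero A hmul h2 htor hu hv hw
  constructor
  · intro a l ha hl hlen
    rcases l with _ | ⟨x, _ | ⟨y, _ | ⟨z, l⟩⟩⟩
    · simp at hlen
    · simp at hlen
    · show a * x * y = 0
      exact h3 ha (hl x (by simp)) (hl y (by simp))
    · simp at hlen
  · -- decomposition of arbitrary elements into sums of homogeneous elements
    have decomp : ∀ r : R, ∃ L : List R, (∀ x ∈ L, ∃ g, x ∈ A g) ∧ L.sum = r := by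
      intro r
      obtain ⟨v, hv⟩ := hA.isInternal.surjective r
      rw [← hv]
      clear hv
      induction v using DirectSum.induction_on with
      | zero => exact ⟨[], by simp, by simp⟩
      | of i x =>
        exact ⟨[(x : R)], by simpa using ⟨i, x.2⟩, by simp⟩
      | add x y ihx ihy =>
        obtain ⟨L1, hL1, hs1⟩ := ihx
        obtain ⟨L2, hL2, hs2⟩ := ihy
        refine ⟨L1 ++ L2, ?_, by simp [hs1, hs2]⟩
        intro x hx
        rcases List.mem_append.1 hx with h | h
        · exact hL1 x h
        · exact hL2 x h
    have aux : ∀ (l : List R) (b : R) (bs : List R) (g : S) (gs : List S),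
        b ∈ A g → List.Forall₂ (fun x h => x ∈ A h) bs gs →
        bs.length + l.length + 1 = 3 * d → mulList b (bs ++ l) = 0 := by
      intro l
      induction l with
      | nil =>
        intro b bs g gs hb hbs hlen
        rw [List.append_nil]
        simp only [List.length_nil] at hlen
        exact homogKey A hmul d hfin hcard h3 hb hbs (by omega)
      | cons x l ih =>
        intro b bs g gs hb hbs hlen
        obtain ⟨L, hL, hsum⟩ := decomp x
        have key : mulList b (bs ++ x :: l) = mulList (mulList b bs * x) l := by
          rw [mulList_append]; rfl
        rw [key, ← hsum, mul_listSum, mulList_listSum]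
        apply List.sum_eq_zero
        intro y hy
        obtain ⟨z, hz, rfl⟩ := List.mem_map.1 hy
        obtain ⟨w, hwL, rfl⟩ := List.mem_map.1 hz
        obtain ⟨h₀, hw⟩ := hL w hwL
        have h4 := ih b (bs ++ [w]) g (gs ++ [h₀]) hb
          (forall₂_append hbs (List.Forall₂.cons hw List.Forall₂.nil))
          (by simp only [List.length_append, List.length_cons, List.length_nil,
                List.length_singleton] at hlen ⊢; omega)
        rw [List.append_assoc] at h4
        rw [mulList_append] at h4
        exact h4
    intro a l hlen
    obtain ⟨L, hL, hsum⟩ := decomp a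
    rw [← hsum, mulList_listSum]
    apply List.sum_eq_zero
    intro y hy
    obtain ⟨x, hxL, rfl⟩ := List.mem_map.1 hy
    obtain ⟨g, hg⟩ := hL x hxL
    have := aux l x [] g [] hg List.Forall₂.nil (by simpa using hlen)
    simpa using this
end

section
/- Let S be a left cancellative monoid and R a ring with a finite S-grading of support size d. If R_e is nil, f-commutative, and finitely generated (by n elements with maximal nilpotency index s), then R is nilpotent with s ≤ nd(R) ≤ d((s−1)n + 1); if R_e = 0, then nd(R) ≤ d + 1. -/
namespace Stmt15Aux

variable {R : Type*} [NonUnitalRing R]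

def pl (l : List R) : R := match l with
  | [] => 0
  | x :: xs => mulList x xs

@[simp] lemma pl_nil : pl ([] : List R) = 0 := rfl
@[simp] lemma pl_cons (x : R) (l : List R) : pl (x :: l) = mulList x l := rfl

lemma mulList_append (a : R) (l₁ l₂ : List R) :
    mulList a (l₁ ++ l₂) = mulList (mulList a l₁) l₂ := List.foldl_append

lemma mulList_add (a b : R) (l : List R) :
    mulList (a + b) l = mulList a l + mulList b l := by
  induction l generalizing a b with
  | nil => rfl
  | cons x xs ih => simpa [mulList, add_mul] using ih (a * x) (b * x)

lemma mulList_neg (a : R) (l : List R) : mulList (-a) l = -mulList a l := by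
  induction l generalizing a with
  | nil => rfl
  | cons x xs ih => simpa [mulList, neg_mul] using ih (a * x)

lemma mulList_zero (l : List R) : mulList (0 : R) l = 0 := by
  induction l with
  | nil => rfl
  | cons x xs ih => simpa [mulList] using ih

lemma mul_mulList (a b : R) (l : List R) : mulList (a * b) l = a * mulList b l := by
  induction l generalizing b with
  | nil => rfl
  | cons x xs ih => simpa [mulList, mul_assoc] using ih (b * x)

lemma mulList_eq_mul_pl (a : R) {l : List R} (h : l ≠ []) : mulList a l = a * pl l := by
  cases l with
  | nil => exact absurd rfl h
  | cons y ys => simpa [mulList] using mul_mulList a y ys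

lemma pl_append {l₁ l₂ : List R} (h₁ : l₁ ≠ []) (h₂ : l₂ ≠ []) :
    pl (l₁ ++ l₂) = pl l₁ * pl l₂ := by
  cases l₁ with
  | nil => exact absurd rfl h₁
  | cons x xs =>
    simp only [List.cons_append, pl_cons, mulList_append]
    exact mulList_eq_mul_pl _ h₂

lemma pl_replicate (b : R) : ∀ m, 1 ≤ m → pl (List.replicate m b) = pw b m := by
  intro m
  induction m with
  | zero => omega
  | succ k ih =>
    intro _
    cases k with
    | zero => simp [pw, mulList]
    | succ j =>
      have h1 : List.replicate (j + 2) b = List.replicate (j + 1) b ++ [b] := by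
        rw [← List.replicate_succ']
      have h2 : pl (List.replicate (j + 1) b ++ [b]) = pl (List.replicate (j+1) b) * b := by
        rw [pl_append (by simp) (by simp)]
        simp [mulList]
      rw [h1, h2, ih (by omega)]
      rfl

lemma pl_mem {T : Set R} (hT : ∀ x y : R, x ∈ T → y ∈ T → x * y ∈ T) :
    ∀ (l : List R), l ≠ [] → (∀ x ∈ l, x ∈ T) → pl l ∈ T := by
  intro l
  induction l with
  | nil => intro h; exact absurd rfl h
  | cons x xs ih =>
    intro _ hmem
    cases xs with
    | nil => simpa [mulList] using hmem x (by simp)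
    | cons y ys =>
      rw [pl_cons, mulList_eq_mul_pl x (by simp)]
      exact hT _ _ (hmem x (by simp)) (ih (by simp) (fun z hz => hmem z (by simp [hz])))

lemma pl_flatten : ∀ (Bs : List (List R)), Bs ≠ [] → (∀ b ∈ Bs, b ≠ []) →
    pl (Bs.map pl) = pl Bs.flatten := by
  intro Bs
  induction Bs with
  | nil => intro h; exact absurd rfl h
  | cons B Bs ih =>
    intro _ hne
    cases Bs with
    | nil => simp [mulList]
    | cons C Cs =>
      have hBne : B ≠ [] := hne B (by simp)
      have hfl : (List.flatten (C :: Cs)) ≠ [] := by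
        have hC : C ≠ [] := hne C (by simp)
        simp only [List.flatten_cons, ne_eq, List.append_eq_nil_iff]
        intro ⟨h, _⟩; exact hC h
      have ihe : pl (List.map pl (C :: Cs)) = pl (C :: Cs).flatten :=
        ih (by simp) (fun b hb => hne b (by simp [hb]))
      calc pl (List.map pl (B :: C :: Cs))
          = pl B * pl (List.map pl (C :: Cs)) := by
            rw [List.map_cons, pl_cons, mulList_eq_mul_pl _ (by simp)]
        _ = pl B * pl (C :: Cs).flatten := by rw [ihe]
        _ = pl (B ++ (C :: Cs).flatten) := (pl_append hBne hfl).symm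
        _ = pl (B :: C :: Cs).flatten := by simp only [List.flatten_cons]

lemma mulList_cons (a x : R) (l : List R) : mulList a (x :: l) = mulList (a * x) l := rfl

lemma multilin (B : Set R) (N : ℕ)
    (hbase : ∀ (a : R) (l : List R), a ∈ B → (∀ x ∈ l, x ∈ B) → l.length + 1 = N →
      mulList a l = 0) :
    ∀ (a : R) (l : List R), a ∈ AddSubgroup.closure B → (∀ x ∈ l, x ∈ AddSubgroup.closure B) →
      l.length + 1 = N → mulList a l = 0 := by
  have aux : ∀ (l₂ : List R), (∀ x ∈ l₂, x ∈ AddSubgroup.closure B) →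
      ∀ (a : R) (l₁ : List R), a ∈ B → (∀ x ∈ l₁, x ∈ B) →
      (l₁ ++ l₂).length + 1 = N → mulList a (l₁ ++ l₂) = 0 := by
    intro l₂
    induction l₂ with
    | nil =>
      intro _ a l₁ ha hl₁ hlen
      simpa using hbase a l₁ ha hl₁ (by simpa using hlen)
    | cons x l₂ ih =>
      intro hmem a l₁ ha hl₁ hlen
      have hrest : ∀ y ∈ l₂, y ∈ AddSubgroup.closure B := fun y hy => hmem y (by simp [hy])
      have hx : x ∈ AddSubgroup.closure B := hmem x (by simp)
      have key : ∀ y : R, y ∈ AddSubgroup.closure B → mulList a (l₁ ++ y :: l₂) = 0 := by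
        intro y hy
        refine AddSubgroup.closure_induction
          (p := fun z _ => mulList a (l₁ ++ z :: l₂) = 0) ?_ ?_ ?_ ?_ hy
        · intro z hz
          have h1 : l₁ ++ z :: l₂ = (l₁ ++ [z]) ++ l₂ := by simp
          rw [h1]
          refine ih hrest a (l₁ ++ [z]) ha ?_ ?_
          · intro w hw
            rcases List.mem_append.1 hw with h | h
            · exact hl₁ w h
            · simp at h; subst h; exact hz
          · rw [← h1]; simp only [List.length_append, List.length_cons] at hlen ⊢; omega
        · show mulList a (l₁ ++ (0:R) :: l₂) = 0
          rw [mulList_append, mulList_cons, mul_zero, mulList_zero]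
        · intro u v _ _ hu hv
          show mulList a (l₁ ++ (u + v) :: l₂) = 0
          simp only [mulList_append, mulList_cons, mul_add, mulList_add] at hu hv ⊢
          rw [hu, hv, add_zero]
        · intro u _ hu
          show mulList a (l₁ ++ (-u) :: l₂) = 0
          simp only [mulList_append, mulList_cons, mul_neg, mulList_neg] at hu ⊢
          rw [hu, neg_zero]
      exact key x hx
  intro a l ha hl hlen
  refine AddSubgroup.closure_induction (p := fun b _ => mulList b l = 0) ?_ ?_ ?_ ?_ ha
  · intro b hb
    simpa using aux l hl b [] hb (by simp) (by simpa using hlen)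
  · exact mulList_zero l
  · intro u v _ _ hu hv; rw [mulList_add, hu, hv, add_zero]
  · intro u _ hu; rw [mulList_neg, hu, neg_zero]

lemma mem_closure_iUnion {S : Type*} [DecidableEq S] (A : S → AddSubgroup R)
    (hA : DirectSum.IsInternal A) (x : R) :
    x ∈ AddSubgroup.closure (⋃ g, (A g : Set R)) := by
  obtain ⟨y, rfl⟩ := hA.surjective x
  induction y using DirectSum.induction_on with
  | zero => simpa using (AddSubgroup.closure (⋃ g, (A g : Set R))).zero_mem
  | of i z =>
    rw [DirectSum.coeAddMonoidHom_of]
    exact AddSubgroup.subset_closure (Set.mem_iUnion.2 ⟨i, z.2⟩)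
  | add u v hu hv => rw [map_add]; exact add_mem hu hv

lemma exists_forall₂ {S : Type*} (A : S → AddSubgroup R) :
    ∀ (L : List R), (∀ x ∈ L, ∃ g, x ∈ A g) →
      ∃ gs : List S, List.Forall₂ (fun x g => x ∈ A g) L gs := by
  intro L
  induction L with
  | nil => intro _; exact ⟨[], List.Forall₂.nil⟩
  | cons x L ih =>
    intro h
    obtain ⟨g, hg⟩ := h x (by simp)
    obtain ⟨gs, hgs⟩ := ih (fun y hy => h y (by simp [hy]))
    exact ⟨g :: gs, List.Forall₂.cons hg hgs⟩


section Graded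

def PowZeroOnX {R : Type*} [Mul R] [Zero R] (T : Set R) (n : ℕ) : Prop :=
  ∀ (a : R) (l : List R), a ∈ T → (∀ x ∈ l, x ∈ T) → l.length + 1 = n → mulList a l = 0

variable {S : Type*} [Monoid S] [IsLeftCancelMul S] [DecidableEq S]
variable {R : Type*} [NonUnitalRing R]

lemma pl_mem_grade (A : S → AddSubgroup R)
    (hmulmem : ∀ {g h : S} {x y : R}, x ∈ A g → y ∈ A h → x * y ∈ A (g * h)) :
    ∀ {L : List R} {gs : List S}, List.Forall₂ (fun x g => x ∈ A g) L gs → L ≠ [] →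
      pl L ∈ A gs.prod := by
  intro L gs h
  induction h with
  | nil => intro h; exact absurd rfl h
  | @cons x g L' gs' hxg htail ih =>
    intro _
    cases htail with
    | nil => simpa [mulList] using hxg
    | @cons y gg L'' gs'' hy htl =>
      rw [pl_cons, mulList_eq_mul_pl x (by simp), List.prod_cons]
      exact hmulmem hxg (ih (by simp))

lemma prod_take_eq (gs : List S) (i j : ℕ) (hij : i ≤ j) :
    (gs.take j).prod = (gs.take i).prod * ((gs.drop i).take (j - i)).prod := by
  rw [← List.prod_append, ← List.take_add]
  have h : i + (j - i) = j := by omega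
  rw [h]

lemma seg_split {α : Type*} (L : List α) (i m j : ℕ) (him : i ≤ m) (hmj : m ≤ j) :
    (L.drop i).take (j - i) = (L.drop i).take (m - i) ++ (L.drop m).take (j - m) := by
  have h1 : j - i = (m - i) + (j - m) := by omega
  rw [h1, List.take_add, List.drop_drop]
  have h : i + (m - i) = m := by omega
  rw [h]

lemma take_ne_nil {α : Type*} {L : List α} {i : ℕ} (hi : 1 ≤ i) (hL : 1 ≤ L.length) :
    L.take i ≠ [] := by
  have : (L.take i).length = min i L.length := List.length_take
  intro h
  rw [h] at this
  simp at this
  omega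

lemma seg_ne_nil {α : Type*} {L : List α} {i j : ℕ} (hij : i < j) (hj : j ≤ L.length) :
    (L.drop i).take (j - i) ≠ [] := by
  apply take_ne_nil (by omega)
  rw [List.length_drop]
  omega

lemma graded_core (A : S → AddSubgroup R)
    (hmulmem : ∀ {g h : S} {x y : R}, x ∈ A g → y ∈ A h → x * y ∈ A (g * h))
    (d : ℕ) (hfin : {g : S | A g ≠ ⊥}.Finite) (hcard : hfin.toFinset.card = d)
    (k N : ℕ) (hk : 1 ≤ k) (hA1 : PowZeroOnX (A 1 : Set R) k)
    (hN : d * k < N + 1) (hNbot : A 1 = ⊥ → d * k < N)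
    (L : List R) (gs : List S) (h2 : List.Forall₂ (fun x g => x ∈ A g) L gs)
    (hlen : L.length = N) (hN1 : 1 ≤ N) : pl L = 0 := by
  classical
  have hglen : gs.length = N := by rw [← h2.length_eq, hlen]
  set P : ℕ → S := fun i => (gs.take i).prod with hP
  -- segments are graded
  have hseg : ∀ i j : ℕ, i < j → j ≤ N →
      pl ((L.drop i).take (j - i)) ∈ A (((gs.drop i).take (j - i)).prod) := by
    intro i j hij hj
    exact pl_mem_grade A hmulmem (List.forall₂_take _ (List.forall₂_drop _ h2))
      (seg_ne_nil hij (by omega))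
  -- a segment between equal partial products lies in A 1
  have hsegA1 : ∀ (c : S) (i j : ℕ), i < j → j ≤ N → P i = c → P j = c →
      pl ((L.drop i).take (j - i)) ∈ A 1 := by
    intro c i j hij hj hPi hPj
    have e1 : P j = P i * ((gs.drop i).take (j - i)).prod := prod_take_eq gs i j (le_of_lt hij)
    have : ((gs.drop i).take (j - i)).prod = 1 :=
      mul_left_cancel (show P i * ((gs.drop i).take (j - i)).prod = P i * 1 by
        rw [← e1, hPi, hPj, mul_one])
    have hm := hseg i j hij hj
    rwa [this] at hm
  -- whole product vanishes if a prefix vanishes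
  have hprefix : ∀ j : ℕ, 1 ≤ j → j ≤ N → pl (L.take j) = 0 → pl L = 0 := by
    intro j hj1 hjN h0
    rcases Nat.eq_or_lt_of_le hjN with h | h
    · rw [← hlen] at h
      rw [h, List.take_length] at h0
      exact h0
    · have : L = L.take j ++ L.drop j := (List.take_append_drop j L).symm
      rw [this, pl_append (take_ne_nil hj1 (by omega))
        (by intro hd; have : (L.drop j).length = L.length - j := List.length_drop; rw [hd] at this; simp at this; omega),
        h0, zero_mul]
  by_cases hbad : ∃ i, 1 ≤ i ∧ i ≤ N ∧ A (P i) = ⊥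
  · obtain ⟨i, hi1, hiN, hbot⟩ := hbad
    have hmem : pl (L.take i) ∈ A (P i) := by
      have := pl_mem_grade A hmulmem (List.forall₂_take i h2) (take_ne_nil hi1 (by omega))
      simpa [hP] using this
    rw [hbot, AddSubgroup.mem_bot] at hmem
    exact hprefix i hi1 hiN hmem
  push_neg at hbad
  -- pigeonhole
  letI : Decidable (A 1 = ⊥) := Classical.dec _
  set D : Finset ℕ := if A 1 = ⊥ then Finset.Icc 1 N else Finset.range (N + 1) with hD
  have hmaps : ∀ i ∈ D, P i ∈ hfin.toFinset := by
    intro i hi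
    rw [Set.Finite.mem_toFinset]
    by_cases h1 : A 1 = ⊥
    · rw [hD, if_pos h1, Finset.mem_Icc] at hi
      exact hbad i hi.1 hi.2
    · rw [hD, if_neg h1, Finset.mem_range] at hi
      rcases Nat.eq_zero_or_pos i with h | h
      · subst h
        simpa [hP] using h1
      · exact hbad i h (by omega)
  have hDcard : hfin.toFinset.card * k < D.card := by
    rw [hcard, hD]
    by_cases h1 : A 1 = ⊥
    · rw [if_pos h1, Nat.card_Icc]
      have := hNbot h1
      omega
    · rw [if_neg h1, Finset.card_range]
      omega
  obtain ⟨c, -, hc⟩ := Finset.exists_lt_card_fiber_of_mul_lt_card_of_maps_to hmaps hDcard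
  set F : Finset ℕ := D.filter (fun i => P i = c) with hF
  have hFmem : ∀ t ∈ F, t ≤ N ∧ P t = c := by
    intro t ht
    rw [hF, Finset.mem_filter] at ht
    refine ⟨?_, ht.2⟩
    rcases ht with ⟨htD, -⟩
    by_cases h1 : A 1 = ⊥
    · rw [hD, if_pos h1, Finset.mem_Icc] at htD; omega
    · rw [hD, if_neg h1, Finset.mem_range] at htD; omega
  -- sorted list of k+1 fiber elements
  have hFcard : k + 1 ≤ F.card := hc
  set es := F.sort (· ≤ ·) with hes
  have hsort : es.Pairwise (· < ·) := List.sortedLT_iff_pairwise.1 (Finset.sortedLT_sort F)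
  have heslen : k + 1 ≤ es.length := by rw [hes, Finset.length_sort]; exact hFcard
  set ts := es.take (k + 1) with hts
  have htslen : ts.length = k + 1 := by rw [hts, List.length_take]; omega
  have htssorted : ts.Pairwise (· < ·) := hsort.sublist (List.take_sublist _ _)
  have htsmem : ∀ t ∈ ts, t ≤ N ∧ P t = c := by
    intro t ht
    exact hFmem t ((Finset.mem_sort _).1 (List.mem_of_mem_take ht))
  -- decompose ts = i₀ :: mids ++ [j]
  obtain ⟨i₀, rest, hts1⟩ := List.exists_cons_of_ne_nil (show ts ≠ [] by
    intro h; rw [h] at htslen; simp at htslen)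
  have hrestne : rest ≠ [] := by
    intro h; rw [hts1, h] at htslen; simp at htslen; omega
  obtain ⟨mids, j, hrest⟩ : ∃ mids jj, rest = mids ++ [jj] := by
    refine ⟨rest.dropLast, rest.getLast hrestne, (List.dropLast_append_getLast hrestne).symm⟩
  have htseq : ts = i₀ :: (mids ++ [j]) := by rw [hts1, hrest]
  have hchain : List.Chain (· < ·) i₀ (mids ++ [j]) := by
    show List.IsChain _ (i₀ :: (mids ++ [j]))
    rw [List.isChain_iff_pairwise, ← htseq]
    exact htssorted
  have hmidlen : mids.length + 2 = k + 1 := by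
    rw [htseq] at htslen; simp at htslen; omega
  have hi₀ : i₀ ≤ N ∧ P i₀ = c := htsmem i₀ (by rw [htseq]; simp)
  have hmidmem : ∀ t ∈ mids ++ [j], t ≤ N ∧ P t = c := by
    intro t ht; exact htsmem t (by rw [htseq]; simp at ht ⊢; tauto)
  -- glue blocks
  have glue : ∀ (ms : List ℕ), ∀ (i j' : ℕ), List.Chain (· < ·) i (ms ++ [j']) →
      (∀ t ∈ ms ++ [j'], t ≤ N ∧ P t = c) → i ≤ N → P i = c →
      ∃ W : List R, W.length = ms.length + 1 ∧ (∀ x ∈ W, x ∈ (A 1 : Set R)) ∧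
        pl ((L.drop i).take (j' - i)) = pl W := by
    intro ms
    induction ms with
    | nil =>
      intro i j' hch hmem hiN hPi
      have hij : i < j' := by
        exact (List.isChain_cons_cons.1 hch).1
      have hj'N : j' ≤ N := (hmem j' (by simp)).1
      refine ⟨[pl ((L.drop i).take (j' - i))], by simp, ?_, rfl⟩
      intro x hx
      simp at hx
      subst hx
      exact hsegA1 c i j' hij hj'N hPi (hmem j' (by simp)).2
    | cons m ms ih =>
      intro i j' hch hmem hiN hPi
      have him : i < m := (List.isChain_cons_cons.1 hch).1
      have hch' : List.Chain (· < ·) m (ms ++ [j']) := by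
        exact (List.isChain_cons_cons.1 hch).2
      have hmN : m ≤ N := (hmem m (by simp)).1
      have hPm : P m = c := (hmem m (by simp)).2
      have hmem' : ∀ t ∈ ms ++ [j'], t ≤ N ∧ P t = c := by
        intro t ht; exact hmem t (by simp at ht ⊢; tauto)
      obtain ⟨W', hWlen', hWmem', hWeq'⟩ := ih m j' hch' hmem' hmN hPm
      have hmj : m < j' := List.IsChain.rel_cons hch' (by simp)
      have hj'N : j' ≤ N := (hmem j' (by simp)).1
      have hsplit := seg_split L i m j' (le_of_lt him) (le_of_lt hmj)
      have hb1 : pl ((L.drop i).take (m - i)) ∈ A 1 := hsegA1 c i m him hmN hPi hPm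
      refine ⟨pl ((L.drop i).take (m - i)) :: W', by simp [hWlen'], ?_, ?_⟩
      · intro x hx
        rcases List.mem_cons.1 hx with h | h
        · subst h; exact hb1
        · exact hWmem' x h
      · have hW'ne : W' ≠ [] := by intro h; rw [h] at hWlen'; simp at hWlen'
        rw [hsplit, pl_append (seg_ne_nil him (by omega)) (seg_ne_nil hmj (by omega)),
          hWeq', pl_cons, mulList_eq_mul_pl _ hW'ne]
  obtain ⟨W, hWlen, hWmem, hWeq⟩ := glue mids i₀ j hchain hmidmem hi₀.1 hi₀.2
  have hWlenk : W.length = k := by omega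
  -- product of the blocks vanishes
  have hW0 : pl W = 0 := by
    obtain ⟨w, wt, hw⟩ := List.exists_cons_of_ne_nil (by
      intro h; rw [h] at hWlenk; simp at hWlenk; omega : W ≠ [])
    rw [hw, pl_cons]
    refine hA1 w wt (hWmem w (by rw [hw]; simp)) (fun x hx => hWmem x (by rw [hw]; simp [hx])) ?_
    rw [hw] at hWlenk; simp at hWlenk; omega
  have hij₀ : i₀ < j := List.IsChain.rel_cons hchain (by simp)
  have hjN : j ≤ N := (hmidmem j (by simp)).1
  have hseg0 : pl ((L.drop i₀).take (j - i₀)) = 0 := by rw [hWeq, hW0]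
  -- prefix up to j vanishes
  have htj : pl (L.take j) = 0 := by
    have hsplit : L.take j = L.take i₀ ++ (L.drop i₀).take (j - i₀) := by
      have : j = i₀ + (j - i₀) := by omega
      rw [this, List.take_add]
      congr 2
      omega
    by_cases h0 : i₀ = 0
    · subst h0
      rw [hsplit]
      simpa using hseg0
    · rw [hsplit, pl_append (take_ne_nil (by omega) (by omega))
        (seg_ne_nil hij₀ (by omega)), hseg0, mul_zero]
  exact hprefix j (by omega) hjN htj

end Graded

section FComm

variable {R : Type*} [NonUnitalRing R]

attribute [local instance] Classical.propDecidable

noncomputable def cnt (b : R) : List R → ℕ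
  | [] => 0
  | x :: xs => cnt b xs + if x = b then 1 else 0

lemma cnt_nil (b : R) : cnt b [] = 0 := rfl

lemma cnt_cons (b x : R) (xs : List R) :
    cnt b (x :: xs) = cnt b xs + if x = b then 1 else 0 := rfl

lemma cnt_append (b : R) : ∀ (u v : List R), cnt b (u ++ v) = cnt b u + cnt b v := by
  intro u v
  induction u with
  | nil => simp [cnt_nil]
  | cons x xs ih => rw [List.cons_append, cnt_cons, cnt_cons, ih]; omega

lemma mem_of_cnt_pos (b : R) : ∀ (w : List R), 1 ≤ cnt b w → b ∈ w := by
  intro w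
  induction w with
  | nil => intro h; simp [cnt_nil] at h
  | cons x xs ih =>
    intro h
    rw [cnt_cons] at h
    by_cases hx : x = b
    · subst hx; simp
    · rw [if_neg hx] at h
      exact List.mem_cons_of_mem _ (ih (by omega))

lemma move_front {T : Set R} (hTmul : ∀ x y : R, x ∈ T → y ∈ T → x * y ∈ T)
    {G : Type} (act : G → R → R)
    (hmul : ∀ l : G, ∀ x y : R, x ∈ T → y ∈ T → act l (x * y) = act l x * y)
    (f : R → R → G) (hf : ∀ a b : R, a ∈ T → b ∈ T → a * b = act (f a b) (b * a))
    (u : List R) (hu : u ≠ []) (hum : ∀ x ∈ u, x ∈ T) (b : R) (hb : b ∈ T)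
    (v : List R) (hv : ∀ x ∈ v, x ∈ T) :
    ∃ l : G, pl (u ++ b :: v) = act l (pl (b :: (u ++ v))) := by
  refine ⟨f (pl u) b, ?_⟩
  have hplu : pl u ∈ T := pl_mem hTmul u hu hum
  have h1 : pl (u ++ [b]) = pl u * b := by
    rw [pl_append hu (by simp)]; rfl
  have h2 : pl u * b = act (f (pl u) b) (b * pl u) := hf _ _ hplu hb
  have h3 : b * pl u = pl (b :: u) := (mulList_eq_mul_pl b hu).symm
  cases v with
  | nil =>
    simp only [List.append_nil]
    calc pl (u ++ [b]) = pl u * b := h1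
      _ = act (f (pl u) b) (b * pl u) := h2
      _ = act (f (pl u) b) (pl (b :: u)) := by rw [h3]
  | cons y ys =>
    have hvne : (y :: ys) ≠ [] := by simp
    have hplv : pl (y :: ys) ∈ T := pl_mem hTmul _ hvne hv
    have hbu : pl (b :: u) ∈ T := pl_mem hTmul _ (by simp)
      (by intro z hz; rcases List.mem_cons.1 hz with h | h
          · subst h; exact hb
          · exact hum z h)
    calc pl (u ++ b :: (y :: ys)) = pl ((u ++ [b]) ++ (y :: ys)) := by
          rw [List.append_assoc]; rfl
      _ = pl (u ++ [b]) * pl (y :: ys) := pl_append (by simp) hvne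
      _ = act (f (pl u) b) (pl (b :: u)) * pl (y :: ys) := by rw [h1, h2, h3]
      _ = act (f (pl u) b) (pl (b :: u) * pl (y :: ys)) := (hmul _ _ _ hbu hplv).symm
      _ = act (f (pl u) b) (pl ((b :: u) ++ (y :: ys))) := by rw [pl_append (by simp) hvne]
      _ = act (f (pl u) b) (pl (b :: (u ++ (y :: ys)))) := by rw [List.cons_append]

lemma kill {T : Set R} (hTmul : ∀ x y : R, x ∈ T → y ∈ T → x * y ∈ T)
    (h0T : (0 : R) ∈ T)
    {G : Type} (act : G → R → R)
    (hmul : ∀ l : G, ∀ x y : R, x ∈ T → y ∈ T → act l (x * y) = act l x * y)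
    (f : R → R → G) (hf : ∀ a b : R, a ∈ T → b ∈ T → a * b = act (f a b) (b * a))
    (b : R) (hb : b ∈ T) (s : ℕ) (hs : 1 ≤ s) (hbs : pw b s = 0) :
    ∀ (M : ℕ) (w : List R), w.length ≤ M → (∀ x ∈ w, x ∈ T) →
      ∀ j : ℕ, s ≤ j + cnt b w → pl (List.replicate j b ++ w) = 0 := by
  have hact0 : ∀ l : G, act l 0 = 0 := by
    intro l
    have := hmul l 0 0 h0T h0T
    simpa using this
  have hrep0 : ∀ j, s ≤ j → pl (List.replicate j b) = 0 := by
    intro j hj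
    have hsplit : List.replicate j b = List.replicate s b ++ List.replicate (j - s) b := by
      rw [← List.replicate_add]; congr 1; omega
    rcases Nat.eq_or_lt_of_le hj with h | h
    · rw [← h, pl_replicate b s hs]; exact hbs
    · rw [hsplit, pl_append (by simp; omega) (by simp; omega),
        pl_replicate b s hs, hbs, zero_mul]
  intro M
  induction M with
  | zero =>
    intro w hlen hw j hcount
    have hwnil : w = [] := List.length_eq_zero_iff.1 (by omega)
    subst hwnil
    rw [cnt_nil] at hcount
    simp only [List.append_nil]
    exact hrep0 j (by omega)
  | succ M ih =>
    intro w hlen hw j hcount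
    by_cases hjs : s ≤ j
    · cases w with
      | nil => simpa using hrep0 j hjs
      | cons y ys =>
        rw [pl_append (by simp; omega) (by simp), hrep0 j hjs, zero_mul]
    · have hbw : b ∈ w := mem_of_cnt_pos b w (by omega)
      obtain ⟨u, v, rfl⟩ := List.append_of_mem hbw
      have hcnt : cnt b (u ++ b :: v) = cnt b u + cnt b v + 1 := by
        rw [cnt_append, cnt_cons, if_pos rfl]
        omega
      have hwlen : (u ++ b :: v).length = u.length + v.length + 1 := by
        rw [List.length_append, List.length_cons]
        omega
      have humem : ∀ x ∈ u, x ∈ T := fun x hx => hw x (by simp [hx])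
      have hvmem : ∀ x ∈ v, x ∈ T := fun x hx => hw x (by simp [hx])
      by_cases hpre : j = 0 ∧ u = []
      · obtain ⟨rfl, rfl⟩ := hpre
        have heq : pl (List.replicate 0 b ++ ([] ++ b :: v)) = pl (List.replicate 1 b ++ v) := rfl
        rw [heq]
        refine ih v (by simp at hlen; omega) hvmem 1 ?_
        rw [hcnt, cnt_nil] at hcount
        omega
      · have hune : (List.replicate j b ++ u) ≠ [] := by
          intro h
          rw [List.append_eq_nil_iff] at h
          rcases h with ⟨h1, h2⟩
          have : j = 0 := by simpa using congrArg List.length h1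
          exact hpre ⟨this, h2⟩
        have humem' : ∀ x ∈ List.replicate j b ++ u, x ∈ T := by
          intro x hx
          rcases List.mem_append.1 hx with h | h
          · rw [List.eq_of_mem_replicate h]; exact hb
          · exact humem x h
        obtain ⟨l, hl⟩ := move_front hTmul act hmul f hf
          (List.replicate j b ++ u) hune humem' b hb v hvmem
        have harr : List.replicate j b ++ (u ++ b :: v)
            = (List.replicate j b ++ u) ++ b :: v := by rw [List.append_assoc]
        have harr2 : b :: ((List.replicate j b ++ u) ++ v)
            = List.replicate (j + 1) b ++ (u ++ v) := by
          rw [List.replicate_succ, List.cons_append, List.append_assoc]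
        have hin : pl (List.replicate (j + 1) b ++ (u ++ v)) = 0 := by
          refine ih (u ++ v) (by simp at hlen ⊢; omega) ?_ (j + 1) ?_
          · intro x hx
            rcases List.mem_append.1 hx with h | h
            · exact humem x h
            · exact hvmem x h
          · rw [cnt_append]
            rw [hcnt] at hcount
            omega
        rw [harr, hl, harr2, hin, hact0]

end FComm

section Mono

variable {R : Type*} [NonUnitalRing R]

lemma choose_forall₂ {α β : Type*} (P : α → β → Prop) :
    ∀ (L : List α), (∀ x ∈ L, ∃ y, P x y) → ∃ ys : List β, List.Forall₂ P L ys := by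
  intro L
  induction L with
  | nil => intro _; exact ⟨[], List.Forall₂.nil⟩
  | cons x L ih =>
    intro h
    obtain ⟨y, hy⟩ := h x (by simp)
    obtain ⟨ys, hys⟩ := ih (fun z hz => h z (by simp [hz]))
    exact ⟨y :: ys, List.Forall₂.cons hy hys⟩

lemma map_of_forall₂ {α β : Type*} (f : β → α) :
    ∀ {L : List α} {ys : List β}, List.Forall₂ (fun x y => x = f y) L ys → L = ys.map f := by
  intro L ys h
  induction h with
  | nil => rfl
  | cons hxy _ ih => rw [List.map_cons, ← ih, hxy]

lemma forall₂_snd {α β : Type*} {P : α → β → Prop} :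
    ∀ {L : List α} {ys : List β}, List.Forall₂ P L ys → ∀ y ∈ ys, ∃ x, P x y := by
  intro L ys h
  induction h with
  | nil => intro y hy; simp at hy
  | cons hxy htl ih =>
    intro y hy
    rcases List.mem_cons.1 hy with h | h
    · subst h; exact ⟨_, hxy⟩
    · exact ih y h

lemma flatten_len {α : Type*} : ∀ (iss : List (List α)), (∀ is ∈ iss, is ≠ []) →
    iss.length ≤ iss.flatten.length := by
  intro iss
  induction iss with
  | nil => simp
  | cons is iss ih =>
    intro h
    have h1 : 1 ≤ is.length := by
      have := h is (by simp)
      cases is with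
      | nil => exact absurd rfl this
      | cons _ _ => simp
    have h2 := ih (fun x hx => h x (by simp [hx]))
    simp only [List.flatten_cons, List.length_cons, List.length_append]
    omega

lemma count_pigeon {n : ℕ} (s : ℕ) (hs : 1 ≤ s) (js : List (Fin n))
    (hlen : (s - 1) * n + 1 ≤ js.length) : ∃ i : Fin n, s ≤ js.count i := by
  by_contra h
  push_neg at h
  have h1 : ∀ i ∈ (↑js : Multiset (Fin n)).toFinset, Multiset.count i ↑js ≤ s - 1 := by
    intro i _
    have := h i
    rw [Multiset.coe_count]
    omega
  have h2 := Finset.sum_le_card_nsmul _ _ (s - 1) h1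
  rw [Multiset.toFinset_sum_count_eq] at h2
  have h4 : (↑js : Multiset (Fin n)).toFinset.card ≤ n := by
    simpa using Finset.card_le_univ (↑js : Multiset (Fin n)).toFinset
  have h5 : Multiset.card (↑js : Multiset (Fin n)) = js.length := Multiset.coe_card js
  rw [h5, smul_eq_mul] at h2
  have h6 : (↑js : Multiset (Fin n)).toFinset.card * (s - 1) ≤ n * (s - 1) :=
    Nat.mul_le_mul_right _ h4
  have h7 : n * (s - 1) = (s - 1) * n := Nat.mul_comm _ _
  omega

lemma cnt_map_ge {n : ℕ} (av : Fin n → R) : ∀ (js : List (Fin n)) (i : Fin n),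
    js.count i ≤ cnt (av i) (js.map av) := by
  intro js i
  induction js with
  | nil => simp [cnt_nil]
  | cons j js ih =>
    by_cases h : j = i
    · subst h
      rw [List.map_cons, cnt_cons, if_pos rfl, List.count_cons_self]
      omega
    · rw [List.map_cons, cnt_cons, List.count_cons_of_ne h]
      split_ifs <;> omega

lemma closure_mono_mul {n : ℕ} (av : Fin n → R) :
    ∀ x ∈ AddSubgroup.closure {y : R | ∃ is : List (Fin n), is ≠ [] ∧ y = pl (is.map av)},
    ∀ y ∈ AddSubgroup.closure {y : R | ∃ is : List (Fin n), is ≠ [] ∧ y = pl (is.map av)},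
      x * y ∈ AddSubgroup.closure {y : R | ∃ is : List (Fin n), is ≠ [] ∧ y = pl (is.map av)} := by
  set Mono := {y : R | ∃ is : List (Fin n), is ≠ [] ∧ y = pl (is.map av)} with hM
  intro x hx
  refine AddSubgroup.closure_induction
    (p := fun x _ => ∀ y ∈ AddSubgroup.closure Mono, x * y ∈ AddSubgroup.closure Mono)
    ?_ ?_ ?_ ?_ hx
  · intro u hu y hy
    refine AddSubgroup.closure_induction
      (p := fun y _ => u * y ∈ AddSubgroup.closure Mono) ?_ ?_ ?_ ?_ hy
    · intro v hv
      obtain ⟨is, hisne, rfl⟩ := hu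
      obtain ⟨is', hisne', rfl⟩ := hv
      refine AddSubgroup.subset_closure ⟨is ++ is', by simp [hisne], ?_⟩
      rw [List.map_append, pl_append (by simpa using hisne) (by simpa using hisne')]
    · show u * (0 : R) ∈ AddSubgroup.closure Mono
      rw [mul_zero]; exact zero_mem _
    · intro y z _ _ hy hz
      show u * (y + z) ∈ AddSubgroup.closure Mono
      rw [mul_add]; exact add_mem hy hz
    · intro y _ hy
      show u * (-y) ∈ AddSubgroup.closure Mono
      rw [mul_neg]; exact neg_mem hy
  · intro y _
    show (0 : R) * y ∈ AddSubgroup.closure Mono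
    rw [zero_mul]; exact zero_mem _
  · intro u v _ _ hu hv y hy
    show (u + v) * y ∈ AddSubgroup.closure Mono
    rw [add_mul]; exact add_mem (hu y hy) (hv y hy)
  · intro u _ hu y hy
    show (-u) * y ∈ AddSubgroup.closure Mono
    rw [neg_mul]; exact neg_mem (hu y hy)

lemma Re_pow (A1 : AddSubgroup R)
    (hTmul : ∀ x y : R, x ∈ A1 → y ∈ A1 → x * y ∈ A1)
    {G : Type} (act : G → R → R)
    (hmul : ∀ l : G, ∀ x y : R, x ∈ (A1 : Set R) → y ∈ (A1 : Set R) →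
      act l (x * y) = act l x * y)
    (f : R → R → G)
    (hf : ∀ a b : R, a ∈ (A1 : Set R) → b ∈ (A1 : Set R) → a * b = act (f a b) (b * a))
    (n s : ℕ) (hs : 1 ≤ s) (av : Fin n → R) (hav : ∀ i, av i ∈ A1)
    (hgen : ∀ x ∈ A1, x ∈ NonUnitalSubring.closure (Set.range av))
    (hsb : ∀ i, pw (av i) s = 0) :
    ∀ (a : R) (l : List R), a ∈ A1 → (∀ x ∈ l, x ∈ A1) →
      l.length + 1 = (s - 1) * n + 1 → mulList a l = 0 := by
  set Mono := {y : R | ∃ is : List (Fin n), is ≠ [] ∧ y = pl (is.map av)} with hM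
  have hspan : ∀ x ∈ A1, x ∈ AddSubgroup.closure Mono := by
    intro x hx
    refine NonUnitalSubring.closure_induction (s := Set.range av)
      (p := fun z _ => z ∈ AddSubgroup.closure Mono) ?_ ?_ ?_ ?_ ?_ (hgen x hx)
    · intro z hz
      obtain ⟨i, rfl⟩ := hz
      exact AddSubgroup.subset_closure ⟨[i], by simp, rfl⟩
    · exact zero_mem _
    · intro u v _ _ hu hv; exact add_mem hu hv
    · intro u _ hu; exact neg_mem hu
    · intro u v hu' hv' hu hv; exact closure_mono_mul av u hu v hv
  have base : ∀ (a : R) (l : List R), a ∈ Mono → (∀ x ∈ l, x ∈ Mono) →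
      l.length + 1 = (s - 1) * n + 1 → mulList a l = 0 := by
    intro a l ha hl hlen
    obtain ⟨iss, hiss⟩ := choose_forall₂
      (fun (x : R) (is : List (Fin n)) => is ≠ [] ∧ x = pl (is.map av)) (a :: l)
      (by
        intro x hx
        rcases List.mem_cons.1 hx with h | h
        · subst h; exact ha
        · exact hl x h)
    have hisslen : iss.length = (s - 1) * n + 1 := by
      rw [← hiss.length_eq]; simpa using hlen
    have hissne : ∀ is ∈ iss, is ≠ [] := by
      intro is his
      obtain ⟨x, hx⟩ := forall₂_snd hiss is his
      exact hx.1
    have hLmap : a :: l = iss.map (fun is => pl (is.map av)) :=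
      map_of_forall₂ _ (hiss.imp (fun _ _ h => h.2))
    set js := iss.flatten with hjs
    have hjslen : (s - 1) * n + 1 ≤ js.length := by
      rw [hjs, ← hisslen]
      exact flatten_len iss hissne
    obtain ⟨i, hi⟩ := count_pigeon s hs js hjslen
    have hcnt : s ≤ cnt (av i) (js.map av) := le_trans hi (cnt_map_ge av js i)
    have hw0 : pl (js.map av) = 0 := by
      have := kill (T := (A1 : Set R)) hTmul (zero_mem A1) act hmul f hf
        (av i) (hav i) s hs (hsb i) (js.map av).length (js.map av) le_rfl
        (by
          intro x hx
          obtain ⟨j, _, rfl⟩ := List.mem_map.1 hx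
          exact hav j)
        0 (by simpa using hcnt)
      simpa using this
    have hblocksne : ∀ b ∈ iss.map (List.map av), b ≠ [] := by
      intro b hb
      obtain ⟨is, his, rfl⟩ := List.mem_map.1 hb
      simpa using hissne is his
    have hissne' : iss ≠ [] := by
      intro h; rw [h] at hisslen; simp at hisslen
    calc mulList a l = pl (a :: l) := rfl
      _ = pl ((iss.map (List.map av)).map pl) := by
          rw [hLmap, List.map_map]; rfl
      _ = pl ((iss.map (List.map av)).flatten) :=
          pl_flatten _ (by simpa using hissne') hblocksne
      _ = pl (js.map av) := by rw [← List.map_flatten]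
      _ = 0 := hw0
  intro a l ha hl hlen
  exact multilin Mono _ base a l (hspan a ha) (fun x hx => hspan x (hl x hx)) hlen

end Mono

end Stmt15Aux

theorem stmt_15 {S R : Type*} [Monoid S] [IsLeftCancelMul S] [DecidableEq S]
    [NonUnitalRing R] (A : S → AddSubgroup R) (hA : IsGrading A)
    (d n s : ℕ) (hfin : {g : S | A g ≠ ⊥}.Finite) (hcard : hfin.toFinset.card = d)
    (hnil : ∀ a ∈ A 1, IsNilE a) (hfc : IsFCommutativeOn (A 1 : Set R))
    (a : Fin n → R) (ha : ∀ i, a i ∈ A 1)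
    (hgen : ∀ x ∈ A 1, x ∈ NonUnitalSubring.closure (Set.range a))
    (hs : 1 ≤ s) (hsb : ∀ i, pw (a i) s = 0)
    (hsmin : 1 < s → ∃ i, pw (a i) (s - 1) ≠ 0) :
    (A 1 ≠ ⊥ →
      PowZero R (d * ((s - 1) * n + 1)) ∧ (1 < s → ¬ PowZero R (s - 1))) ∧
    (A 1 = ⊥ → PowZero R (d + 1)) := by
  classical
  obtain ⟨G, instG, act, hcomp, hactmem, hactmul, f, hf⟩ := hfc
  have hTmul : ∀ x y : R, x ∈ A 1 → y ∈ A 1 → x * y ∈ A 1 := by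
    intro x y hx hy
    have := hA.mul_mem hx hy
    rwa [one_mul] at this
  set k := (s - 1) * n + 1 with hkdef
  have hk1 : 1 ≤ k := by omega
  constructor
  · intro hne
    have hd1 : 1 ≤ d := by
      rw [← hcard]
      refine Finset.card_pos.2 ⟨1, ?_⟩
      rw [Set.Finite.mem_toFinset]
      exact hne
    have hdk1 : 1 ≤ d * k := by
      have := Nat.mul_le_mul hd1 hk1
      simpa using this
    have hRe : Stmt15Aux.PowZeroOnX (A 1 : Set R) k := fun x l hx hl hlen =>
      Stmt15Aux.Re_pow (A 1) hTmul act hactmul f hf n s hs a ha hgen hsb x l hx hl hlen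
    constructor
    · intro x l hlen
      refine Stmt15Aux.multilin (⋃ g, (A g : Set R)) (d * k) ?_ x l
        (Stmt15Aux.mem_closure_iUnion A hA.isInternal x)
        (fun y _ => Stmt15Aux.mem_closure_iUnion A hA.isInternal y) hlen
      intro a' l' ha' hl' hlen'
      obtain ⟨gs, hgs⟩ := Stmt15Aux.choose_forall₂ (fun (x : R) (g : S) => x ∈ A g) (a' :: l')
        (by
          intro z hz
          rcases List.mem_cons.1 hz with h | h
          · subst h; exact Set.mem_iUnion.1 ha'
          · exact Set.mem_iUnion.1 (hl' z h))
      exact Stmt15Aux.graded_core A (fun {g h x y} hx hy => hA.mul_mem hx hy) d hfin hcard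
        k (d * k) hk1 hRe (Nat.lt_succ_self _) (fun h => absurd h hne) (a' :: l') gs hgs
        (by simpa using hlen') hdk1
    · intro hs1 hPZ
      obtain ⟨i, hi⟩ := hsmin hs1
      apply hi
      have h2 := hPZ (a i) (List.replicate (s - 2) (a i))
        (by rw [List.length_replicate]; omega)
      have h1 : List.replicate (s - 1) (a i) = (a i) :: List.replicate (s - 2) (a i) := by
        have hx : s - 1 = (s - 2) + 1 := by omega
        rw [hx, List.replicate_succ]
      rw [← Stmt15Aux.pl_replicate (a i) (s - 1) (by omega), h1]
      exact h2
  · intro hbot x l hlen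
    refine Stmt15Aux.multilin (⋃ g, (A g : Set R)) (d + 1) ?_ x l
      (Stmt15Aux.mem_closure_iUnion A hA.isInternal x)
      (fun y _ => Stmt15Aux.mem_closure_iUnion A hA.isInternal y) hlen
    intro a' l' ha' hl' hlen'
    obtain ⟨gs, hgs⟩ := Stmt15Aux.choose_forall₂ (fun (x : R) (g : S) => x ∈ A g) (a' :: l')
      (by
        intro z hz
        rcases List.mem_cons.1 hz with h | h
        · subst h; exact Set.mem_iUnion.1 ha'
        · exact Set.mem_iUnion.1 (hl' z h))
    have hA1 : Stmt15Aux.PowZeroOnX (A 1 : Set R) 1 := by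
      intro z l'' hz _ hlen''
      have hz0 : z = 0 := by
        rw [hbot] at hz
        simpa using hz
      have hl0 : l'' = [] := List.length_eq_zero_iff.1 (by omega)
      subst hz0 hl0
      rfl
    exact Stmt15Aux.graded_core A (fun {g h x y} hx hy => hA.mul_mem hx hy) d hfin hcard
      1 (d + 1) le_rfl hA1 (by omega) (fun _ => by omega) (a' :: l') gs hgs
      (by simpa using hlen') (by omega)
end
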